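/- Let Y be a nonnegative random variable with E[Y²] < ∞ under probability P and E^Q[Y] < ∞ under another probability Q, let θ ≥ 0 and κ > 0. Define H(I) = (1+θ)E^Q[I(Y)] + E[Y − I(Y)] + (κ/2)E[(Y − I(Y))²] for I ∈ C. Then the infimum of H over C is attained by some I* ∈ C. -/
import Mathlib


open MeasureTheory Filter Topology

/-- The class `C` of incentive-compatible indemnity functions. -/
def IndemnityC (f : ℝ → ℝ) : Prop :=
  f 0 = 0 ∧ ∀ x y : ℝ, 0 ≤ x → x ≤ y → 0 ≤ f y - f x ∧ f y - f x ≤ y - x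

lemma indem_bounds {I : ℝ → ℝ} (hI : IndemnityC I) {x : ℝ} (hx : 0 ≤ x) :
    0 ≤ I x ∧ I x ≤ x := by
  have h := hI.2 0 x le_rfl hx
  rw [hI.1] at h
  constructor <;> linarith [h.1, h.2]

lemma indem_lipschitz {I : ℝ → ℝ} (hI : IndemnityC I) :
    LipschitzWith 1 (fun x => I (max x 0)) := by
  apply LipschitzWith.of_dist_le_mul
  intro x y
  rw [NNReal.coe_one, one_mul, Real.dist_eq, Real.dist_eq]
  have key : ∀ a b : ℝ, max b 0 ≤ max a 0 → |I (max a 0) - I (max b 0)| ≤ |a - b| := by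
    intro a b hab
    have h := hI.2 (max b 0) (max a 0) (le_max_right _ _) hab
    rw [abs_of_nonneg h.1]
    calc I (max a 0) - I (max b 0) ≤ max a 0 - max b 0 := h.2
      _ ≤ |max a 0 - max b 0| := le_abs_self _
      _ ≤ |a - b| := abs_max_sub_max_le_abs a b 0
  rcases le_total (max y 0) (max x 0) with h | h
  · exact key x y h
  · rw [abs_sub_comm, abs_sub_comm x y]; exact key y x h

lemma indem_comp_measurable {Ω : Type*} [MeasurableSpace Ω] {I : ℝ → ℝ} (hI : IndemnityC I)
    {Y : Ω → ℝ} (hY : Measurable Y) (hYnn : ∀ ω, 0 ≤ Y ω) :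
    Measurable (fun ω => I (Y ω)) := by
  have : (fun ω => I (Y ω)) = (fun x => I (max x 0)) ∘ Y := by
    funext ω; simp [Function.comp, max_eq_left (hYnn ω)]
  rw [this]
  exact ((indem_lipschitz hI).continuous.measurable).comp hY

/-- Existence of a minimizer of
`H(I) = (1+θ)E^Q[I(Y)] + E[Y − I(Y)] + (κ/2)E[(Y − I(Y))²]` over `C`. -/
theorem exists_minimizer_H
    {Ω : Type*} [MeasurableSpace Ω] (P Q : Measure Ω)
    [IsProbabilityMeasure P] [IsProbabilityMeasure Q]
    (Y : Ω → ℝ) (hY : Measurable Y) (hYnn : ∀ ω, 0 ≤ Y ω)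
    (hY2 : Integrable (fun ω => (Y ω) ^ 2) P) (hYQ : Integrable Y Q)
    (θ κ : ℝ) (hθ : 0 ≤ θ) (hκ : 0 < κ)
    (H : (ℝ → ℝ) → ℝ)
    (hH : ∀ I : ℝ → ℝ, H I =
      (1 + θ) * ∫ ω, I (Y ω) ∂Q + ∫ ω, (Y ω - I (Y ω)) ∂P +
        κ / 2 * ∫ ω, (Y ω - I (Y ω)) ^ 2 ∂P) :
    ∃ Istar : ℝ → ℝ, IndemnityC Istar ∧ ∀ I : ℝ → ℝ, IndemnityC I → H Istar ≤ H I := by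
  classical
  -- H is nonnegative on the class C
  have Hnn : ∀ I : ℝ → ℝ, IndemnityC I → 0 ≤ H I := by
    intro I hI
    rw [hH]
    have h1 : 0 ≤ ∫ ω, I (Y ω) ∂Q :=
      integral_nonneg fun ω => (indem_bounds hI (hYnn ω)).1
    have h2 : 0 ≤ ∫ ω, (Y ω - I (Y ω)) ∂P :=
      integral_nonneg fun ω => by have := (indem_bounds hI (hYnn ω)).2; simp only [Pi.zero_apply]; linarith
    have h3 : 0 ≤ ∫ ω, (Y ω - I (Y ω)) ^ 2 ∂P := integral_nonneg fun ω => sq_nonneg _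
    have hθ1 : (0:ℝ) ≤ 1 + θ := by linarith
    have hκ2 : (0:ℝ) ≤ κ / 2 := by positivity
    exact add_nonneg (add_nonneg (mul_nonneg hθ1 h1) h2) (mul_nonneg hκ2 h3)
  have hC0 : IndemnityC (fun _ => 0) :=
    ⟨rfl, fun x y hx hxy => ⟨by simp, by simp; linarith⟩⟩
  set S : Set ℝ := {a | ∃ I : ℝ → ℝ, IndemnityC I ∧ H I = a} with hS
  have hSne : S.Nonempty := ⟨H (fun _ => 0), fun _ => 0, hC0, rfl⟩
  have hSbdd : BddBelow S := ⟨0, by rintro a ⟨I, hI, rfl⟩; exact Hnn I hI⟩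
  set m := sInf S with hm
  have hm_le : ∀ I : ℝ → ℝ, IndemnityC I → m ≤ H I := fun I hI => csInf_le hSbdd ⟨I, hI, rfl⟩
  -- minimizing sequence
  have hex : ∀ n : ℕ, ∃ I : ℝ → ℝ, IndemnityC I ∧ H I < m + 1 / ((n:ℝ) + 1) := by
    intro n
    have hpos : (0:ℝ) < 1 / ((n:ℝ) + 1) := by positivity
    have hlt : sInf S < m + 1 / ((n:ℝ) + 1) := by rw [← hm]; linarith
    obtain ⟨a, haS, halt⟩ := (csInf_lt_iff hSbdd hSne).1 hlt
    obtain ⟨I, hI, rfl⟩ := haS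
    exact ⟨I, hI, halt⟩
  choose f hfC hflt using hex
  -- compactness: extract subsequence converging pointwise on the rationals
  set r : ℕ → ℚ → ℝ := fun n q => f n (max (q:ℝ) 0) with hr
  have hs : IsCompact (Set.univ.pi fun q : ℚ => Set.Icc (0:ℝ) (max (q:ℝ) 0)) :=
    isCompact_univ_pi fun q => isCompact_Icc
  have hmem : ∀ n, r n ∈ Set.univ.pi fun q : ℚ => Set.Icc (0:ℝ) (max (q:ℝ) 0) := by
    intro n
    rw [Set.mem_univ_pi]
    intro q
    exact ⟨(indem_bounds (hfC n) (le_max_right _ _)).1,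
      (indem_bounds (hfC n) (le_max_right _ _)).2⟩
  obtain ⟨ρ, -, φ, hφ, hρ⟩ := hs.tendsto_subseq hmem
  have hρq : ∀ q : ℚ, Tendsto (fun k => f (φ k) (max (q:ℝ) 0)) atTop (𝓝 (ρ q)) :=
    fun q => tendsto_pi_nhds.1 hρ q
  -- the subsequence converges at every nonnegative real
  have hlim : ∀ x : ℝ, 0 ≤ x → ∃ L, Tendsto (fun k => f (φ k) x) atTop (𝓝 L) := by
    intro x hx
    apply cauchySeq_tendsto_of_complete
    rw [Metric.cauchySeq_iff]
    intro ε hε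
    obtain ⟨q, hq1, hq2⟩ := exists_rat_btwn (show x < x + ε / 3 by linarith)
    have hq0 : (0:ℝ) ≤ (q:ℝ) := le_of_lt (lt_of_le_of_lt hx hq1)
    have hmax : max (q:ℝ) 0 = (q:ℝ) := max_eq_left hq0
    have hcq : CauchySeq (fun k => f (φ k) (max (q:ℝ) 0)) := (hρq q).cauchySeq
    rw [Metric.cauchySeq_iff] at hcq
    obtain ⟨N, hN⟩ := hcq (ε / 3) (by linarith)
    refine ⟨N, fun a ha b hb => ?_⟩
    have key : ∀ k, dist (f (φ k) x) (f (φ k) (q:ℝ)) ≤ (q:ℝ) - x := by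
      intro k
      have h := (hfC (φ k)).2 x q hx hq1.le
      rw [Real.dist_eq, abs_sub_comm, abs_of_nonneg h.1]
      exact h.2
    have hNab := hN a ha b hb
    rw [hmax] at hNab
    have hka := key a
    have hkb := key b
    have htri := dist_triangle4 (f (φ a) x) (f (φ a) (q:ℝ)) (f (φ b) (q:ℝ)) (f (φ b) x)
    have hcb : dist (f (φ b) (q:ℝ)) (f (φ b) x) = dist (f (φ b) x) (f (φ b) (q:ℝ)) :=
      dist_comm _ _
    rw [hcb] at htri
    calc dist (f (φ a) x) (f (φ b) x) ≤ _ := htri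
      _ < ε := by linarith
  set Istar : ℝ → ℝ := fun x => if h : 0 ≤ x then (hlim x h).choose else 0 with hIstar
  have htend : ∀ x : ℝ, 0 ≤ x → Tendsto (fun k => f (φ k) x) atTop (𝓝 (Istar x)) := by
    intro x hx
    have : Istar x = (hlim x hx).choose := by rw [hIstar]; exact dif_pos hx
    rw [this]
    exact (hlim x hx).choose_spec
  -- the limit is in C
  have hIstarC : IndemnityC Istar := by
    constructor
    · have h0 : Tendsto (fun k => f (φ k) 0) atTop (𝓝 0) := by
        have : (fun k => f (φ k) 0) = fun _ => (0:ℝ) := funext fun k => (hfC (φ k)).1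
        rw [this]; exact tendsto_const_nhds
      exact tendsto_nhds_unique (htend 0 le_rfl) h0
    · intro x y hx hxy
      have hy : 0 ≤ y := le_trans hx hxy
      have hsub : Tendsto (fun k => f (φ k) y - f (φ k) x) atTop (𝓝 (Istar y - Istar x)) :=
        (htend y hy).sub (htend x hx)
      constructor
      · exact le_of_tendsto_of_tendsto' tendsto_const_nhds hsub
          fun k => ((hfC (φ k)).2 x y hx hxy).1
      · exact le_of_tendsto_of_tendsto' hsub tendsto_const_nhds
          fun k => ((hfC (φ k)).2 x y hx hxy).2
  -- Y is integrable under P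
  have hYP : Integrable Y P := by
    have h1 : Integrable (fun ω => Y ω ^ 2 + 1) P := hY2.add (integrable_const 1)
    refine h1.mono hY.aestronglyMeasurable (ae_of_all _ fun ω => ?_)
    rw [Real.norm_eq_abs, Real.norm_eq_abs, abs_of_nonneg (hYnn ω),
      abs_of_nonneg (by positivity)]
    nlinarith [hYnn ω, sq_nonneg (Y ω - 1)]
  -- dominated convergence for the three integrals
  have term1 : Tendsto (fun k => ∫ ω, f (φ k) (Y ω) ∂Q) atTop
      (𝓝 (∫ ω, Istar (Y ω) ∂Q)) := by
    refine tendsto_integral_of_dominated_convergence Y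
      (fun k => (indem_comp_measurable (hfC (φ k)) hY hYnn).aestronglyMeasurable)
      hYQ (fun k => ae_of_all _ fun ω => ?_) (ae_of_all _ fun ω => htend (Y ω) (hYnn ω))
    rw [Real.norm_eq_abs, abs_of_nonneg (indem_bounds (hfC (φ k)) (hYnn ω)).1]
    exact (indem_bounds (hfC (φ k)) (hYnn ω)).2
  have term2 : Tendsto (fun k => ∫ ω, (Y ω - f (φ k) (Y ω)) ∂P) atTop
      (𝓝 (∫ ω, (Y ω - Istar (Y ω)) ∂P)) := by
    refine tendsto_integral_of_dominated_convergence Y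
      (fun k => (hY.sub (indem_comp_measurable (hfC (φ k)) hY hYnn)).aestronglyMeasurable)
      hYP (fun k => ae_of_all _ fun ω => ?_)
      (ae_of_all _ fun ω => tendsto_const_nhds.sub (htend (Y ω) (hYnn ω)))
    have hb := indem_bounds (hfC (φ k)) (hYnn ω)
    rw [Real.norm_eq_abs, abs_of_nonneg (by linarith [hb.2])]
    linarith [hb.1]
  have term3 : Tendsto (fun k => ∫ ω, (Y ω - f (φ k) (Y ω)) ^ 2 ∂P) atTop
      (𝓝 (∫ ω, (Y ω - Istar (Y ω)) ^ 2 ∂P)) := by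
    refine tendsto_integral_of_dominated_convergence (fun ω => Y ω ^ 2)
      (fun k => ((hY.sub (indem_comp_measurable (hfC (φ k)) hY hYnn)).pow_const 2).aestronglyMeasurable)
      hY2 (fun k => ae_of_all _ fun ω => ?_)
      (ae_of_all _ fun ω => (tendsto_const_nhds.sub (htend (Y ω) (hYnn ω))).pow 2)
    have hb := indem_bounds (hfC (φ k)) (hYnn ω)
    rw [Real.norm_eq_abs, abs_of_nonneg (sq_nonneg _)]
    have h1 : 0 ≤ Y ω - f (φ k) (Y ω) := by linarith [hb.2]
    have h2 : Y ω - f (φ k) (Y ω) ≤ Y ω := by linarith [hb.1]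
    show (Y ω - f (φ k) (Y ω)) ^ 2 ≤ Y ω ^ 2
    nlinarith
  -- H along the subsequence converges to H Istar
  have HUk : Tendsto (fun k => H (f (φ k))) atTop (𝓝 (H Istar)) := by
    simp only [hH]
    exact ((term1.const_mul (1 + θ)).add term2).add (term3.const_mul (κ / 2))
  -- H along the subsequence converges to m
  have Hto_m : Tendsto (fun k => H (f (φ k))) atTop (𝓝 m) := by
    have hh : Tendsto (fun k : ℕ => m + 1 / ((k:ℝ) + 1)) atTop (𝓝 m) := by
      have h0 : Tendsto (fun n : ℕ => 1 / ((n:ℝ) + 1)) atTop (𝓝 0) :=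
        tendsto_one_div_add_atTop_nhds_zero_nat
      simpa using tendsto_const_nhds.add h0
    refine tendsto_of_tendsto_of_tendsto_of_le_of_le tendsto_const_nhds hh
      (fun k => hm_le _ (hfC (φ k))) (fun k => ?_)
    have hle : 1 / ((φ k : ℝ) + 1) ≤ 1 / ((k:ℝ) + 1) := by
      apply one_div_le_one_div_of_le (by positivity)
      exact_mod_cast Nat.succ_le_succ (hφ.le_apply)
    linarith [hflt (φ k)]
  have hIm : H Istar = m := tendsto_nhds_unique HUk Hto_m
  exact ⟨Istar, hIstarC, fun I hI => by rw [hIm]; exact hm_le I hI⟩
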